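/- Let μ ∈ ℝ and consider λ ∈ ℝ with λ + μ > 0. Define G_0(λ) = ((λ+μ)²/2)·log(λ+μ) − (3/4)(λ+μ)², G_1(λ) = −(1/12)·log(λ+μ), and G_g(λ) = (B_{2g}/(2g(2g−2)))·(λ+μ)^{2−2g} for g ≥ 2. Then for every integer n ≥ 1 and every λ with λ+μ > 0, Σ_{k=1}^{n} (2/(2k)!) · G_{n−k}^{(2k)}(λ) = log(λ+μ) if n = 1, and = 0 if n ≥ 2. (That is, the formal series F(λ;ℏ) = Σ_{g≥0} ℏ^{2g−2} G_g(λ) solves the difference equation F(λ+ℏ) − 2F(λ) + F(λ−ℏ) = log(λ+μ) order by order in ℏ.) -/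

import Mathlib

open Finset

lemma itd_congr (μ : ℝ) {f g : ℝ → ℝ} (h : ∀ x : ℝ, 0 < x + μ → f x = g x)
    {x : ℝ} (hx : 0 < x + μ) (m : ℕ) : iteratedDeriv m f x = iteratedDeriv m g x := by
  apply Filter.EventuallyEq.iteratedDeriv_eq
  have hopen : IsOpen {y : ℝ | 0 < y + μ} :=
    isOpen_lt continuous_const (continuous_id.add continuous_const)
  exact Filter.eventuallyEq_of_mem (hopen.mem_nhds hx) h

lemma hasDerivAt_shift_zpow (μ C : ℝ) (a : ℤ) (x : ℝ) (hx : 0 < x + μ) :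
    HasDerivAt (fun y => C * (y+μ)^a) (C * ((a:ℝ) * (x+μ)^(a-1))) x := by
  have h1 : HasDerivAt (fun y : ℝ => y + μ) 1 x := (hasDerivAt_id x).add_const μ
  have h2 := (hasDerivAt_zpow a (x+μ) (Or.inl hx.ne')).comp x h1
  simpa using h2.const_mul C

lemma itd_zpow (μ C : ℝ) (a : ℤ) (m : ℕ) :
    ∀ x : ℝ, 0 < x + μ → iteratedDeriv m (fun y => C * (y+μ)^a) x
      = C * (∏ i ∈ Finset.range m, ((a:ℝ) - i)) * (x+μ)^(a - m) := by
  induction m with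
  | zero => intro x hx; simp
  | succ m ih =>
    intro x hx
    rw [iteratedDeriv_succ]
    have hopen : IsOpen {y : ℝ | 0 < y + μ} :=
      isOpen_lt continuous_const (continuous_id.add continuous_const)
    have hev : iteratedDeriv m (fun y => C * (y+μ)^a) =ᶠ[nhds x]
        fun y => (C * (∏ i ∈ Finset.range m, ((a:ℝ) - i))) * (y+μ)^(a - m) :=
      Filter.eventuallyEq_of_mem (hopen.mem_nhds hx) (fun y hy => ih y hy)
    rw [hev.deriv_eq, (hasDerivAt_shift_zpow μ _ (a - m) x hx).deriv,
      Finset.prod_range_succ]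
    have : (a - (m:ℤ)) - 1 = a - ((m:ℕ)+1 : ℕ) := by push_cast; ring
    rw [this]
    push_cast
    ring

lemma itd_log (μ C : ℝ) (j : ℕ) (x : ℝ) (hx : 0 < x + μ) :
    iteratedDeriv (j+1) (fun y => C * Real.log (y+μ)) x
      = C * (∏ i ∈ Finset.range j, (-1 - (i:ℝ))) * (x+μ)^((-1 : ℤ) - j) := by
  rw [iteratedDeriv_succ']
  have h1 : ∀ y : ℝ, 0 < y + μ → deriv (fun y => C * Real.log (y+μ)) y
      = C * (y+μ)^(-1:ℤ) := by
    intro y hy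
    have hd : HasDerivAt (fun y => C * Real.log (y+μ)) (C * (y+μ)⁻¹) y := by
      have := (Real.hasDerivAt_log hy.ne').comp y ((hasDerivAt_id y).add_const μ)
      simpa using this.const_mul C
    rw [hd.deriv, zpow_neg_one]
  rw [itd_congr μ h1 hx j, itd_zpow μ C (-1) j x hx]
  norm_num

lemma itd_H0_two (μ : ℝ) : ∀ x : ℝ, 0 < x + μ →
    iteratedDeriv 2 (fun y => (y+μ)^2/2 * Real.log (y+μ) - 3/4*(y+μ)^2) x
      = Real.log (x+μ) := by
  intro x hx
  have hopen : IsOpen {y : ℝ | 0 < y + μ} :=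
    isOpen_lt continuous_const (continuous_id.add continuous_const)
  have hd1 : ∀ y : ℝ, 0 < y + μ →
      deriv (fun y => (y+μ)^2/2 * Real.log (y+μ) - 3/4*(y+μ)^2) y
        = (y+μ) * Real.log (y+μ) - (y+μ) := by
    intro y hy
    have hid : HasDerivAt (fun y : ℝ => y + μ) 1 y := (hasDerivAt_id y).add_const μ
    have hlog : HasDerivAt (fun y => Real.log (y+μ)) (y+μ)⁻¹ y := by
      exact ((Real.hasDerivAt_log hy.ne').comp y hid).congr_deriv (mul_one _)
    have hsq : HasDerivAt (fun y : ℝ => (y+μ)^2/2) (y+μ) y := by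
      have := (hid.pow 2).div_const 2
      simpa using this
    have h34 : HasDerivAt (fun y : ℝ => 3/4*(y+μ)^2) (3/2*(y+μ)) y := by
      have := (hid.pow 2).const_mul (3/4 : ℝ)
      exact this.congr_deriv (by norm_num; ring)
    have := (hsq.mul hlog).sub h34
    refine this.deriv.trans ?_
    field_simp
    ring
  have hd2 : ∀ y : ℝ, 0 < y + μ →
      deriv (fun y => (y+μ) * Real.log (y+μ) - (y+μ)) y = Real.log (y+μ) := by
    intro y hy
    have hid : HasDerivAt (fun y : ℝ => y + μ) 1 y := (hasDerivAt_id y).add_const μ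
    have hlog : HasDerivAt (fun y => Real.log (y+μ)) (y+μ)⁻¹ y := by
      exact ((Real.hasDerivAt_log hy.ne').comp y hid).congr_deriv (mul_one _)
    have := (hid.mul hlog).sub hid
    refine this.deriv.trans ?_
    field_simp
    ring
  rw [iteratedDeriv_succ, iteratedDeriv_one]
  have hev : deriv (fun y => (y+μ)^2/2 * Real.log (y+μ) - 3/4*(y+μ)^2) =ᶠ[nhds x]
      fun y => (y+μ) * Real.log (y+μ) - (y+μ) :=
    Filter.eventuallyEq_of_mem (hopen.mem_nhds hx) (fun y hy => hd1 y hy)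
  rw [hev.deriv_eq, hd2 x hx]

lemma prod_neg_fact (m : ℕ) :
    ∏ i ∈ Finset.range m, (-1 - (i:ℝ)) = (-1)^m * (Nat.factorial m : ℝ) := by
  induction m with
  | zero => simp
  | succ m ih =>
    rw [Finset.prod_range_succ, ih, Nat.factorial_succ]
    push_cast; ring

lemma fact_prod (d m : ℕ) :
    (Nat.factorial d : ℝ) * ∏ i ∈ Finset.range m, ((d:ℝ)+1+i)
      = (Nat.factorial (d+m) : ℝ) := by
  induction m with
  | zero => simp
  | succ m ih =>
    rw [Finset.prod_range_succ, ← mul_assoc, ih, show d+(m+1) = (d+m)+1 by ring,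
      Nat.factorial_succ]
    push_cast; ring

lemma itd_split (m : ℕ) (f : ℝ → ℝ) (x : ℝ) :
    iteratedDeriv (m+2) f x = iteratedDeriv m (iteratedDeriv 2 f) x := by
  simp only [iteratedDeriv_eq_iterate]
  exact congrFun (Function.iterate_add_apply deriv m 2 f) x

lemma itd_H0 (μ : ℝ) (m : ℕ) (x : ℝ) (hx : 0 < x + μ) :
    iteratedDeriv (m+4) (fun y => (y+μ)^2/2 * Real.log (y+μ) - 3/4*(y+μ)^2) x
      = (∏ i ∈ Finset.range (m+1), (-1 - (i:ℝ))) * (x+μ)^((-1:ℤ) - ((m:ℕ)+1:ℕ)) := by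
  rw [show m+4 = (m+2)+2 by ring, itd_split,
    itd_congr μ (itd_H0_two μ) hx (m+2),
    itd_congr μ (fun y (_ : 0 < y + μ) => (one_mul (Real.log (y+μ))).symm) hx (m+2),
    show m+2 = (m+1)+1 from rfl, itd_log μ 1 (m+1) x hx, one_mul]

lemma val0 (μ : ℝ) (p : ℕ) (x : ℝ) (hx : 0 < x + μ) :
    iteratedDeriv (2*p+4) (fun y => (y+μ)^2/2 * Real.log (y+μ) - 3/4*(y+μ)^2) x
      = -(Nat.factorial (2*p+1) : ℝ) * (x+μ)^(-2*(p:ℤ)-2) := by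
  rw [itd_H0 μ (2*p) x hx, prod_neg_fact]
  have he : ((-1:ℤ) - ((2*p:ℕ)+1:ℕ)) = -2*(p:ℤ)-2 := by push_cast; ring
  rw [he, pow_succ, (even_two_mul p).neg_one_pow]
  ring

lemma val1 (μ C : ℝ) (p : ℕ) (x : ℝ) (hx : 0 < x + μ) :
    iteratedDeriv (2*p+2) (fun y => C * Real.log (y+μ)) x
      = -C * (Nat.factorial (2*p+1) : ℝ) * (x+μ)^(-2*(p:ℤ)-2) := by
  rw [show 2*p+2 = (2*p+1)+1 from rfl, itd_log μ C (2*p+1) x hx, prod_neg_fact]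
  have he : ((-1:ℤ) - ((2*p+1:ℕ):ℕ)) = -2*(p:ℤ)-2 := by push_cast; ring
  rw [he, pow_succ, (even_two_mul p).neg_one_pow]
  ring

lemma val2 (μ C : ℝ) (h k : ℕ) (x : ℝ) (hx : 0 < x + μ) :
    iteratedDeriv (2*k) (fun y => C * (y+μ)^(-2*(h:ℤ)-2)) x
      = C * ((Nat.factorial (2*h+1+2*k) : ℝ)/(Nat.factorial (2*h+1) : ℝ))
          * (x+μ)^(-2*(h:ℤ)-2-2*(k:ℤ)) := by
  rw [itd_zpow μ C _ (2*k) x hx]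
  have hprod : ∏ i ∈ Finset.range (2*k), (((-2*(h:ℤ)-2 : ℤ):ℝ) - i)
      = (Nat.factorial (2*h+1+2*k) : ℝ)/(Nat.factorial (2*h+1) : ℝ) := by
    have h1 : ∀ i ∈ Finset.range (2*k), (((-2*(h:ℤ)-2 : ℤ):ℝ) - i)
        = (-1) * (((2*h+1:ℕ):ℝ)+1+i) := by
      intro i _; push_cast; ring
    rw [Finset.prod_congr rfl h1, Finset.prod_mul_distrib, Finset.prod_const,
      Finset.card_range, (even_two_mul k).neg_one_pow, one_mul]
    rw [eq_div_iff (by exact_mod_cast (Nat.factorial_ne_zero (2*h+1)))]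
    rw [mul_comm]
    exact fact_prod (2*h+1) (2*k)
  rw [hprod]
  congr 1
open Finset

lemma sum_range_two_mul (f : ℕ → ℚ) (n : ℕ) :
    ∑ i ∈ Finset.range (2*n), f i = ∑ g ∈ Finset.range n, (f (2*g) + f (2*g+1)) := by
  induction n with
  | zero => simp
  | succ n ih =>
    have h : 2*(n+1) = (2*n+1)+1 := by ring
    rw [h, Finset.sum_range_succ, Finset.sum_range_succ, ih, Finset.sum_range_succ, add_assoc]

lemma bern_odd (m : ℕ) (h1 : Odd m) (h2 : 1 < m) : bernoulli m = 0 := by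
  rw [bernoulli_eq_bernoulli'_of_ne_one (by omega), bernoulli'_eq_zero_of_odd h1 h2]

lemma bkeyQ (n : ℕ) (hn : 2 ≤ n) :
    ∑ g ∈ Finset.Icc 1 (n-1), ((2*n).choose (2*g) : ℚ) * bernoulli (2*g) * (2*(g:ℚ) - 1) = 1 := by
  have hA : ∑ g ∈ Finset.range n, ((2*n).choose (2*g) : ℚ) * bernoulli (2*g) = n := by
    have h0 := sum_bernoulli (2*n)
    rw [if_neg (by omega), sum_range_two_mul, Finset.sum_add_distrib] at h0
    have hodd : ∑ g ∈ Finset.range n, ((2*n).choose (2*g+1) : ℚ) * bernoulli (2*g+1) = -n := by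
      rw [Finset.sum_eq_single_of_mem 0 (Finset.mem_range.2 (by omega))]
      · simp [Nat.choose_one_right]; ring
      · intro g _ hg
        rw [bern_odd (2*g+1) ⟨g, by ring⟩ (by omega), mul_zero]
    rw [hodd] at h0; linarith
  have hB : ∑ g ∈ Finset.range n, ((2*n-1).choose (2*g) : ℚ) * bernoulli (2*g)
      = (2*(n:ℚ)-1)/2 := by
    have h0 := sum_bernoulli (2*n-1)
    rw [if_neg (by omega)] at h0
    have hext : ∑ i ∈ Finset.range (2*n-1+1), (((2*n-1).choose i : ℚ) * bernoulli i) = 0 := by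
      rw [Finset.sum_range_succ, h0, bern_odd (2*n-1) ⟨n-1, by omega⟩ (by omega)]
      ring
    rw [show 2*n-1+1 = 2*n by omega, sum_range_two_mul, Finset.sum_add_distrib] at hext
    have hodd : ∑ g ∈ Finset.range n, ((2*n-1).choose (2*g+1) : ℚ) * bernoulli (2*g+1)
        = -(2*(n:ℚ)-1)/2 := by
      rw [Finset.sum_eq_single_of_mem 0 (Finset.mem_range.2 (by omega))]
      · rw [bernoulli_one, Nat.mul_zero, Nat.zero_add, Nat.choose_one_right,
          Nat.cast_sub (by omega : 1 ≤ 2*n)]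
        push_cast; ring
      · intro g _ hg
        rw [bern_odd (2*g+1) ⟨g, by ring⟩ (by omega), mul_zero]
    rw [hodd] at hext; linarith
  have hins : Finset.range n = insert 0 (Finset.Icc 1 (n-1)) := by
    ext x; simp [Finset.mem_Icc, Finset.mem_range]; omega
  have h0nm : (0:ℕ) ∉ Finset.Icc 1 (n-1) := by simp
  rw [hins, Finset.sum_insert h0nm] at hA hB
  simp only [Nat.mul_zero, Nat.choose_zero_right, bernoulli_zero, Nat.cast_one, one_mul] at hA hB
  have hterm : ∀ g ∈ Finset.Icc 1 (n-1),
      ((2*n).choose (2*g) : ℚ) * bernoulli (2*g) * (2*(g:ℚ) - 1)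
      = (2*(n:ℚ)-1) * (((2*n).choose (2*g) : ℚ) * bernoulli (2*g))
        - 2*(n:ℚ) * (((2*n-1).choose (2*g) : ℚ) * bernoulli (2*g)) := by
    intro g hg
    rw [Finset.mem_Icc] at hg
    have hmul : 2*n * ((2*n-1).choose (2*g-1)) = (2*n).choose (2*g) * (2*g) := by
      have h := Nat.add_one_mul_choose_eq (2*n-1) (2*g-1)
      rwa [show 2*n-1+1 = 2*n by omega, show 2*g-1+1 = 2*g by omega] at h
    have hpas : (2*n).choose (2*g) = (2*n-1).choose (2*g-1) + (2*n-1).choose (2*g) := by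
      have h := Nat.choose_succ_succ (2*n-1) (2*g-1)
      rwa [show (2*n-1).succ = 2*n by omega, show (2*g-1).succ = 2*g by omega] at h
    have hmulQ : 2*(n:ℚ) * ((2*n-1).choose (2*g-1) : ℚ)
        = ((2*n).choose (2*g) : ℚ) * (2*(g:ℚ)) := by exact_mod_cast hmul
    have hpasQ : ((2*n).choose (2*g) : ℚ)
        = ((2*n-1).choose (2*g-1) : ℚ) + ((2*n-1).choose (2*g) : ℚ) := by exact_mod_cast hpas
    linear_combination (-(bernoulli (2*g))) * hmulQ - 2*(n:ℚ)*(bernoulli (2*g)) * hpasQ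
  rw [Finset.sum_congr rfl hterm, Finset.sum_sub_distrib, ← Finset.mul_sum, ← Finset.mul_sum]
  linear_combination (2*(n:ℚ)-1)*hA - 2*(n:ℚ)*hB

lemma bkeyR (p : ℕ) :
    ∑ g ∈ Finset.Icc 1 (p+1), ((2*p+4).choose (2*g) : ℝ) * ((bernoulli (2*g) : ℚ) : ℝ)
      * (2*(g:ℝ) - 1) = 1 := by
  have h := bkeyQ (p+2) (by omega)
  rw [show p+2-1 = p+1 from rfl, show 2*(p+2) = 2*p+4 by ring] at h
  exact_mod_cast h

/-- The formal series `F(λ;ℏ) = Σ_{g≥0} ℏ^{2g−2} G_g(λ)` with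
`G_0 = ((λ+μ)²/2)log(λ+μ) − (3/4)(λ+μ)²`, `G_1 = −(1/12)log(λ+μ)`,
`G_g = (B_{2g}/(2g(2g−2)))(λ+μ)^{2−2g}` (g ≥ 2) solves
`F(λ+ℏ) − 2F(λ) + F(λ−ℏ) = log(λ+μ)` order by order in `ℏ`. -/
theorem stmt2 (μ : ℝ) (G : ℕ → ℝ → ℝ)
    (hG0 : ∀ l : ℝ, 0 < l + μ →
      G 0 l = (l + μ) ^ 2 / 2 * Real.log (l + μ) - 3 / 4 * (l + μ) ^ 2)
    (hG1 : ∀ l : ℝ, 0 < l + μ → G 1 l = -(1 / 12) * Real.log (l + μ))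
    (hGg : ∀ g : ℕ, 2 ≤ g → ∀ l : ℝ, 0 < l + μ →
      G g l = (bernoulli (2 * g) : ℝ) / (2 * (g : ℝ) * (2 * (g : ℝ) - 2))
                * (l + μ) ^ (2 - 2 * (g : ℤ)))
    (n : ℕ) (hn : 1 ≤ n) (l : ℝ) (hl : 0 < l + μ) :
    ∑ k ∈ Finset.Icc 1 n,
        2 / (Nat.factorial (2 * k) : ℝ) * iteratedDeriv (2 * k) (G (n - k)) l
      = if n = 1 then Real.log (l + μ) else 0 := by
  rcases Nat.lt_or_ge n 2 with h1 | h2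
  · have hn1 : n = 1 := by omega
    subst hn1
    rw [if_pos rfl, Finset.Icc_self, Finset.sum_singleton]
    have h2 : iteratedDeriv (2*1) (G (1-1)) l = Real.log (l+μ) := by
      rw [show (2*1 : ℕ) = 2 from rfl, show (1-1 : ℕ) = 0 from rfl,
        itd_congr μ hG0 hl 2, itd_H0_two μ l hl]
    rw [h2]
    norm_num [Nat.factorial]
  · rw [if_neg (by omega)]
    obtain ⟨p, rfl⟩ : ∃ p, n = p+2 := ⟨n-2, by omega⟩
    have hx0 : (l+μ) ≠ 0 := hl.ne'
    have hX0 : (l+μ)^(-2*(p:ℤ)-2) ≠ 0 := zpow_ne_zero _ hx0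
    have hF1 : (Nat.factorial (2*p+1) : ℝ) ≠ 0 := by
      exact_mod_cast Nat.factorial_ne_zero _
    have hF4 : (Nat.factorial (2*p+4) : ℝ) ≠ 0 := by
      exact_mod_cast Nat.factorial_ne_zero _
    have key : ∀ k ∈ Finset.Icc 1 (p+2),
        2 / (Nat.factorial (2*k) : ℝ) * iteratedDeriv (2*k) (G (p+2-k)) l
        = (2 * (Nat.factorial (2*p+1) : ℝ) / (Nat.factorial (2*p+4) : ℝ)
            * (l+μ)^(-2*(p:ℤ)-2))
          * (if k = p+2 then (-1:ℝ)
            else ((2*p+4).choose (2*(p+2-k)) : ℝ) * ((bernoulli (2*(p+2-k)) : ℚ) : ℝ)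
                 * (2*((p+2-k : ℕ):ℝ) - 1)) := by
      intro k hk
      rw [Finset.mem_Icc] at hk
      by_cases hkn : k = p+2
      · subst hkn
        rw [if_pos rfl, show p+2-(p+2) = 0 by omega,
          itd_congr μ hG0 hl (2*(p+2)),
          show 2*(p+2) = 2*p+4 by ring, val0 μ p l hl]
        ring
      · rw [if_neg hkn]
        by_cases hk1 : k = p+1
        · subst hk1
          rw [show p+2-(p+1) = 1 by omega, itd_congr μ hG1 hl (2*(p+1)),
            show 2*(p+1) = 2*p+2 by ring, val1 μ (-(1/12)) p l hl]
          have hb2 : bernoulli 2 = 1/6 := by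
            rw [bernoulli_eq_bernoulli'_of_ne_one (by norm_num), bernoulli'_two]
          rw [show (2*1 : ℕ) = 2 from rfl, hb2]
          have hch : ((2*p+4).choose 2 : ℝ) * 2 * (Nat.factorial (2*p+2) : ℝ)
              = (Nat.factorial (2*p+4) : ℝ) := by
            have h0 := Nat.choose_mul_factorial_mul_factorial
              (show 2 ≤ 2*p+4 by omega)
            rw [show 2*p+4-2 = 2*p+2 by omega] at h0
            have h1 := congrArg (Nat.cast : ℕ → ℝ) h0
            push_cast at h1
            rw [show (Nat.factorial 2 : ℝ) = 2 by norm_num [Nat.factorial]] at h1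
            linarith
          have hF2 : (Nat.factorial (2*p+2) : ℝ) ≠ 0 := by
            exact_mod_cast Nat.factorial_ne_zero _
          have hCh : ((2*p+4).choose 2 : ℝ) ≠ 0 := by
            have := Nat.choose_pos (show 2 ≤ 2*p+4 by omega)
            positivity
          rw [← hch]
          push_cast
          field_simp
          ring
        · have hkp : k ≤ p := by omega
          rw [show p+2-k = (p-k)+2 by omega]
          set h := p - k with hh
          have hpk : h + k = p := by omega
          rw [itd_congr μ (fun y hy => hGg (h+2) (by omega) y hy) hl (2*k)]
          have he : ((2:ℤ) - 2*(((h+2:ℕ)):ℤ)) = -2*(h:ℤ)-2 := by push_cast; ring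
          rw [he, val2 μ _ h k l hl]
          rw [show -2*(h:ℤ)-2-2*(k:ℤ) = -2*(p:ℤ)-2 by omega,
            show 2*h+1+2*k = 2*p+1 by omega]
          have hrel : ((2*p+4).choose (2*(h+2)) : ℝ) * (Nat.factorial (2*(h+2)) : ℝ)
              * (Nat.factorial (2*k) : ℝ) = (Nat.factorial (2*p+4) : ℝ) := by
            have hle : 2*(h+2) ≤ 2*p+4 := by omega
            have h0 := Nat.choose_mul_factorial_mul_factorial hle
            rw [show 2*p+4 - 2*(h+2) = 2*k by omega] at h0
            exact_mod_cast congrArg (Nat.cast : ℕ → ℝ) h0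
          have hfac : (Nat.factorial (2*(h+2)) : ℝ)
              = (2*(h:ℝ)+4)*(2*(h:ℝ)+3)*(2*(h:ℝ)+2) * (Nat.factorial (2*h+1) : ℝ) := by
            rw [show 2*(h+2) = (2*h+3)+1 by ring, Nat.factorial_succ,
              show 2*h+3 = (2*h+2)+1 by ring, Nat.factorial_succ,
              show 2*h+2 = (2*h+1)+1 by ring, Nat.factorial_succ]
            push_cast; ring
          have hF2k : (Nat.factorial (2*k) : ℝ) ≠ 0 := by
            exact_mod_cast Nat.factorial_ne_zero _
          have hF2h1 : (Nat.factorial (2*h+1) : ℝ) ≠ 0 := by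
            exact_mod_cast Nat.factorial_ne_zero _
          have hCh : ((2*p+4).choose (2*(h+2)) : ℝ) ≠ 0 := by
            have := Nat.choose_pos (show 2*(h+2) ≤ 2*p+4 by omega)
            positivity
          have hhn : (0:ℝ) ≤ (h:ℝ) := Nat.cast_nonneg h
          have hd1 : (2*((h:ℝ)+2)) ≠ 0 := by positivity
          have hd2 : (2*((h:ℝ)+2)-2) ≠ 0 := by nlinarith
          rw [← hrel, hfac]
          push_cast
          field_simp
          ring_nf
          field_simp
          ring
    rw [Finset.sum_congr rfl key, ← Finset.mul_sum]
    have hsum : ∑ k ∈ Finset.Icc 1 (p+2),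
        (if k = p+2 then (-1:ℝ)
          else ((2*p+4).choose (2*(p+2-k)) : ℝ) * ((bernoulli (2*(p+2-k)) : ℚ) : ℝ)
               * (2*((p+2-k : ℕ):ℝ) - 1)) = 0 := by
      rw [show Finset.Icc 1 (p+2) = insert (p+2) (Finset.Icc 1 (p+1)) by
          ext a; simp only [Finset.mem_Icc, Finset.mem_insert]; omega,
        Finset.sum_insert (by simp), if_pos rfl]
      have hre : ∑ k ∈ Finset.Icc 1 (p+1),
          (if k = p+2 then (-1:ℝ)
            else ((2*p+4).choose (2*(p+2-k)) : ℝ) * ((bernoulli (2*(p+2-k)) : ℚ) : ℝ)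
                 * (2*((p+2-k : ℕ):ℝ) - 1))
          = ∑ g ∈ Finset.Icc 1 (p+1),
              ((2*p+4).choose (2*g) : ℝ) * ((bernoulli (2*g) : ℚ) : ℝ)
                * (2*(g:ℝ) - 1) := by
        apply Finset.sum_nbij' (fun k => p+2-k) (fun g => p+2-g)
        · intro a ha; rw [Finset.mem_Icc] at *; omega
        · intro a ha; rw [Finset.mem_Icc] at *; omega
        · intro a ha; rw [Finset.mem_Icc] at ha; omega
        · intro a ha; rw [Finset.mem_Icc] at ha; omega
        · intro a ha; rw [Finset.mem_Icc] at ha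
          rw [if_neg (by omega)]
      rw [hre, bkeyR p]
      ring
    rw [hsum, mul_zero]
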